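/- Let 1 ≤ p < ∞, ε > 0, and let ρ : [0, ∞) → (0, ∞) be a Borel, locally integrable function. Suppose R_{p,ρ} = ∞, where R_{p,ρ} = ∫_0^∞ e^{-εpt/(p-1)} ρ(t)^{1/(1-p)} dt if p > 1, and R_{1,ρ} = ‖e^{-εt} ρ(t)^{-1}‖_{L^∞([0,∞))} if p = 1. Then there exists a Borel function q : [0, ∞) → [0, ∞) such that ∫_0^∞ q(t) e^{-εt} dt = ∞ and ∫_0^∞ q(t)^p ρ(t) dt < ∞. -/

import Mathlib

open MeasureTheory
open scoped ENNReal

lemma exists_phi (p : ℝ) (hp : 1 < p) (G : ℝ → ℝ≥0∞) (hG : Measurable G)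
    (hGfin : ∀ t, G t < ⊤) (hGtop : ∫⁻ t in Set.Ici (0:ℝ), G t = ⊤) :
    ∃ φ : ℝ → ℝ≥0∞, Measurable φ ∧ (∀ t, φ t ≤ 1) ∧
      (∫⁻ t in Set.Ici (0:ℝ), G t * φ t = ⊤) ∧
      (∫⁻ t in Set.Ici (0:ℝ), G t * (φ t) ^ p < ⊤) := by
  classical
  set A : ℕ → Set ℝ := fun n => Set.Icc (0:ℝ) n ∩ {t | G t ≤ n} with hA
  have hAmeas : ∀ n, MeasurableSet (A n) := fun n =>
    measurableSet_Icc.inter (hG measurableSet_Iic)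
  have hAmono : Monotone A := by
    intro i j hij
    apply Set.inter_subset_inter
    · exact Set.Icc_subset_Icc le_rfl (by exact_mod_cast hij)
    · intro t ht
      exact le_trans ht ((Nat.cast_le (α := ℝ≥0∞)).mpr hij)
  have hAsub : ∀ n, A n ⊆ Set.Ici 0 := fun n t ht => ht.1.1
  have hAU : (⋃ n, A n) = Set.Ici 0 := by
    apply Set.Subset.antisymm
    · exact Set.iUnion_subset hAsub
    · intro t ht
      obtain ⟨n₁, hn₁⟩ := ENNReal.exists_nat_gt (hGfin t).ne
      obtain ⟨n₂, hn₂⟩ := exists_nat_ge t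
      refine Set.mem_iUnion.mpr ⟨max n₁ n₂, ⟨ht, ?_⟩, ?_⟩
      · exact hn₂.trans (by exact_mod_cast Nat.cast_le.mpr (le_max_right _ _))
      · exact le_trans hn₁.le (by exact_mod_cast Nat.cast_le.mpr (le_max_left _ _))
  set m : ℕ → ℝ≥0∞ := fun n => ∫⁻ t in A n, G t with hm
  have hmmono : Monotone m := fun i j hij =>
    lintegral_mono' (Measure.restrict_mono (hAmono hij) le_rfl) le_rfl
  have hmfin : ∀ n, m n < ⊤ := by
    intro n
    have h1 : m n ≤ ∫⁻ _ in A n, (n : ℝ≥0∞) := by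
      apply setLIntegral_mono' (hAmeas n)
      intro t ht; exact ht.2
    have h2 : (∫⁻ _ in A n, (n : ℝ≥0∞)) = n * volume (A n) := setLIntegral_const _ _
    have h3 : volume (A n) ≤ volume (Set.Icc (0:ℝ) n) :=
      measure_mono Set.inter_subset_left
    calc m n ≤ n * volume (A n) := h1.trans_eq h2
      _ ≤ n * volume (Set.Icc (0:ℝ) n) := by gcongr
      _ < ⊤ := ENNReal.mul_lt_top (by simp)
        (by rw [Real.volume_Icc]; exact ENNReal.ofReal_lt_top)
  have hmtop : (⨆ n, m n) = ⊤ := by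
    have h1 : ∀ n, Measurable ((A n).indicator G) := fun n => hG.indicator (hAmeas n)
    have h2 : Monotone (fun n => (A n).indicator G) := by
      intro i j hij t
      by_cases ht : t ∈ A i
      · simp [Set.indicator_of_mem ht, Set.indicator_of_mem (hAmono hij ht)]
      · simp [Set.indicator_of_notMem ht]
    have h3 : (fun t => ⨆ n, (A n).indicator G t) = (Set.Ici (0:ℝ)).indicator G := by
      funext t
      by_cases ht : t ∈ Set.Ici (0:ℝ)
      · rw [Set.indicator_of_mem ht]
        obtain ⟨n₀, hn₀⟩ := Set.mem_iUnion.mp (hAU ▸ ht)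
        apply le_antisymm
        · exact iSup_le fun n => Set.indicator_le_self _ _ t
        · exact le_iSup_of_le n₀ (by rw [Set.indicator_of_mem hn₀])
      · rw [Set.indicator_of_notMem ht]
        simp only [ENNReal.iSup_eq_zero]
        intro n
        exact Set.indicator_of_notMem (fun h => ht (hAsub n h)) _
    calc (⨆ n, m n) = ⨆ n, ∫⁻ t, (A n).indicator G t := by
          simp only [hm, lintegral_indicator (hAmeas _)]
      _ = ∫⁻ t, ⨆ n, (A n).indicator G t := (lintegral_iSup h1 h2).symm
      _ = ∫⁻ t in Set.Ici 0, G t := by rw [h3, lintegral_indicator measurableSet_Ici]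
      _ = ⊤ := hGtop
  -- recursive choice
  have key : ∀ (j k : ℕ), ∃ n : ℕ, k ≤ n ∧
      m k + ENNReal.ofReal ((2:ℝ) ^ ((j:ℝ)/(p-1))) < m n := by
    intro j k
    have hfin : m k + ENNReal.ofReal ((2:ℝ) ^ ((j:ℝ)/(p-1))) < ⊤ :=
      ENNReal.add_lt_top.mpr ⟨hmfin k, ENNReal.ofReal_lt_top⟩
    have : m k + ENNReal.ofReal ((2:ℝ) ^ ((j:ℝ)/(p-1))) < ⨆ n, m n := by
      rw [hmtop]; exact hfin
    obtain ⟨n, hn⟩ := lt_iSup_iff.mp this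
    exact ⟨max k n, le_max_left _ _, hn.trans_le (hmmono (le_max_right _ _))⟩
  set N : ℕ → ℕ := fun j => Nat.rec 0 (fun j ih => (key j ih).choose) j with hN
  have hNspec : ∀ j, N j ≤ N (j+1) ∧
      m (N j) + ENNReal.ofReal ((2:ℝ) ^ ((j:ℝ)/(p-1))) < m (N (j+1)) := by
    intro j
    have : N (j+1) = (key j (N j)).choose := rfl
    rw [this]
    exact (key j (N j)).choose_spec
  have hNmono : Monotone N := monotone_nat_of_le_succ fun j => (hNspec j).1
  set C : ℕ → Set ℝ := fun j => A (N (j+1)) \ A (N j) with hC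
  have hCmeas : ∀ j, MeasurableSet (C j) := fun j => (hAmeas _).diff (hAmeas _)
  have hCsub : ∀ j, C j ⊆ Set.Ici 0 := fun j t ht => hAsub _ ht.1
  have hCdisj : ∀ i j, i < j → Disjoint (C i) (C j) := by
    intro i j hij
    rw [Set.disjoint_left]
    intro t hti htj
    exact htj.2 (hAmono (hNmono hij) hti.1)
  set c : ℕ → ℝ≥0∞ := fun j => ∫⁻ t in C j, G t with hc
  have hsplit : ∀ j, m (N (j+1)) = m (N j) + c j := by
    intro j
    have hu : A (N (j+1)) = A (N j) ∪ C j := by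
      rw [Set.union_diff_cancel (hAmono (hNmono j.le_succ))]
    have hd : Disjoint (A (N j)) (C j) := Set.disjoint_sdiff_right
    rw [hm]
    simp only
    rw [hu, lintegral_union (hCmeas j) hd]
  have hclb : ∀ j : ℕ, ENNReal.ofReal ((2:ℝ) ^ ((j:ℝ)/(p-1))) ≤ c j := by
    intro j
    have h := (hNspec j).2
    rw [hsplit j] at h
    exact le_of_lt ((ENNReal.add_lt_add_iff_left (hmfin (N j)).ne).mp h)
  have hcfin : ∀ j : ℕ, c j < ⊤ := by
    intro j
    have : c j ≤ m (N (j+1)) := by rw [hsplit j]; exact le_add_self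
    exact this.trans_lt (hmfin _)
  have h2rpow : ∀ j : ℕ, (1:ℝ) ≤ (2:ℝ) ^ ((j:ℝ)/(p-1)) := by
    intro j
    apply Real.one_le_rpow one_le_two
    have hp1 : (0:ℝ) < p - 1 := by linarith
    positivity
  have hc1 : ∀ j, 1 ≤ c j := fun j =>
    le_trans (by simpa using ENNReal.ofReal_le_ofReal (h2rpow j)) (hclb j)
  have hcne0 : ∀ j, c j ≠ 0 := fun j h => by simpa [h] using hc1 j
  have hmem_unique : ∀ {j b : ℕ} {t : ℝ}, t ∈ C j → b ≠ j → t ∉ C b := by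
    intro j b t ht hb htb
    rcases lt_or_gt_of_ne hb with h | h
    · exact (Set.disjoint_left.mp (hCdisj b j h) htb) ht
    · exact (Set.disjoint_left.mp (hCdisj j b h) ht) htb
  set φ : ℝ → ℝ≥0∞ := fun t => ∑' j, (C j).indicator (fun _ => (c j)⁻¹) t with hφ
  have hφmeas : Measurable φ :=
    Measurable.ennreal_tsum fun j => measurable_const.indicator (hCmeas j)
  have hφval : ∀ (j : ℕ) (t : ℝ), t ∈ C j → φ t = (c j)⁻¹ := by
    intro j t ht
    rw [hφ]
    simp only
    rw [tsum_eq_single j]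
    · rw [Set.indicator_of_mem ht]
    · intro b hb
      exact Set.indicator_of_notMem (hmem_unique ht hb) _
  have hφval0 : ∀ t : ℝ, (∀ j, t ∉ C j) → φ t = 0 := by
    intro t ht
    rw [hφ]
    simp only [Set.indicator_of_notMem (ht _)]
    exact tsum_zero
  have hφle1 : ∀ t, φ t ≤ 1 := by
    intro t
    by_cases h : ∃ j, t ∈ C j
    · obtain ⟨j, hj⟩ := h
      rw [hφval j t hj]
      exact ENNReal.inv_le_one.mpr (hc1 j)
    · push_neg at h
      rw [hφval0 t h]
      exact zero_le_one
  -- generic computation of the integrals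
  have hpipe : ∀ e : ℕ → ℝ≥0∞,
      (∫⁻ t in Set.Ici (0:ℝ), ∑' j, (C j).indicator (fun s => e j * G s) t)
        = ∑' j, e j * c j := by
    intro e
    rw [lintegral_tsum fun j => ((hG.const_mul (e j)).indicator (hCmeas j)).aemeasurable]
    apply tsum_congr
    intro j
    rw [lintegral_indicator (hCmeas j), Measure.restrict_restrict (hCmeas j),
        Set.inter_eq_self_of_subset_left (hCsub j), lintegral_const_mul _ hG]
  have hI1 : ∫⁻ t in Set.Ici (0:ℝ), G t * φ t = ⊤ := by
    have heq : ∀ t : ℝ, G t * φ t = ∑' j, (C j).indicator (fun s => (c j)⁻¹ * G s) t := by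
      intro t
      by_cases h : ∃ j, t ∈ C j
      · obtain ⟨j, hj⟩ := h
        rw [hφval j t hj, tsum_eq_single j (fun b hb => Set.indicator_of_notMem (hmem_unique hj hb) _),
          Set.indicator_of_mem hj, mul_comm]
      · push_neg at h
        rw [hφval0 t h, mul_zero]
        symm
        simp only [Set.indicator_of_notMem (h _)]
        exact tsum_zero
    rw [lintegral_congr heq, hpipe]
    have : ∀ j : ℕ, (c j)⁻¹ * c j = 1 := fun j => ENNReal.inv_mul_cancel (hcne0 j) (hcfin j).ne
    simp only [this]
    exact ENNReal.tsum_const_eq_top_of_ne_zero one_ne_zero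
  have hI2 : ∫⁻ t in Set.Ici (0:ℝ), G t * φ t ^ p < ⊤ := by
    have heq : ∀ t : ℝ, G t * φ t ^ p = ∑' j, (C j).indicator (fun s => ((c j)⁻¹) ^ p * G s) t := by
      intro t
      by_cases h : ∃ j, t ∈ C j
      · obtain ⟨j, hj⟩ := h
        rw [hφval j t hj, tsum_eq_single j (fun b hb => Set.indicator_of_notMem (hmem_unique hj hb) _),
          Set.indicator_of_mem hj, mul_comm]
      · push_neg at h
        rw [hφval0 t h, ENNReal.zero_rpow_of_pos (by linarith : (0:ℝ) < p), mul_zero]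
        symm
        simp only [Set.indicator_of_notMem (h _)]
        exact tsum_zero
    rw [lintegral_congr heq, hpipe]
    have hbound : ∀ j : ℕ, ((c j)⁻¹) ^ p * c j ≤ ENNReal.ofReal ((2:ℝ) ^ (-(j:ℝ))) := by
      intro j
      have hpm1 : (0:ℝ) < p - 1 := by linarith
      have h1 : ((c j)⁻¹) ^ p * c j = (c j) ^ (1 - p) := by
        rw [ENNReal.inv_rpow, ← ENNReal.rpow_neg]
        calc (c j) ^ (-p) * c j = (c j) ^ (-p) * (c j) ^ (1:ℝ) := by rw [ENNReal.rpow_one]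
          _ = (c j) ^ (-p + 1) := (ENNReal.rpow_add _ _ (hcne0 j) (hcfin j).ne).symm
          _ = (c j) ^ (1 - p) := by ring_nf
      have h2 : (c j) ^ (1 - p) ≤ (ENNReal.ofReal ((2:ℝ) ^ ((j:ℝ)/(p-1)))) ^ (1 - p) := by
        have hee : (1 - p) = -(p - 1) := by ring
        rw [hee, ENNReal.rpow_neg, ENNReal.rpow_neg]
        exact ENNReal.inv_le_inv' (ENNReal.rpow_le_rpow (hclb j) (by linarith))
      have h3 : (ENNReal.ofReal ((2:ℝ) ^ ((j:ℝ)/(p-1)))) ^ (1 - p)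
          = ENNReal.ofReal ((2:ℝ) ^ (-(j:ℝ))) := by
        rw [ENNReal.ofReal_rpow_of_pos (by positivity), ← Real.rpow_mul (by norm_num)]
        congr 1
        have : (j:ℝ)/(p-1) * (1 - p) = -(j:ℝ) := by
          field_simp
          ring
        rw [this]
      rw [h1]
      exact h2.trans_eq h3
    calc (∑' j : ℕ, ((c j)⁻¹) ^ p * c j)
        ≤ ∑' j : ℕ, ENNReal.ofReal ((2:ℝ) ^ (-(j:ℝ))) := ENNReal.tsum_le_tsum hbound
      _ = ∑' j : ℕ, (2⁻¹ : ℝ≥0∞) ^ j := by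
          apply tsum_congr
          intro j
          rw [Real.rpow_neg (by norm_num : (0:ℝ) ≤ 2), Real.rpow_natCast, ← inv_pow,
            ENNReal.ofReal_pow (by norm_num)]
          congr 1
          rw [ENNReal.ofReal_inv_of_pos (by norm_num)]
          norm_num
      _ = (1 - 2⁻¹)⁻¹ := ENNReal.tsum_geometric _
      _ < ⊤ := by
          rw [ENNReal.inv_lt_top, pos_iff_ne_zero]
          intro h
          rw [tsub_eq_zero_iff_le] at h
          have h2 : ¬ ((1:ℝ≥0∞) ≤ 2⁻¹) := by
            rw [not_le, ENNReal.inv_lt_one]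
            exact ENNReal.one_lt_two
          exact h2 h
  exact ⟨φ, hφmeas, hφle1, hI1, hI2⟩

/-- if `R_{p,ρ} = ∞` (where `R_{p,ρ} = ∫_0^∞ e^{-εpt/(p-1)} ρ(t)^{1/(1-p)} dt`
for `p > 1` and `R_{1,ρ} = ‖e^{-εt} ρ(t)^{-1}‖_{L^∞([0,∞))}` for `p = 1`), there is a
nonnegative Borel `q` with `∫_0^∞ q e^{-εt} dt = ∞` and `∫_0^∞ q^p ρ dt < ∞`. -/
theorem stmt_13 (p ε : ℝ) (hp : 1 ≤ p) (hε : 0 < ε)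
    (ρ : ℝ → ℝ) (hρmeas : Measurable ρ) (hρpos : ∀ t, 0 ≤ t → 0 < ρ t)
    (hρloc : ∀ T : ℝ, 0 < T → IntegrableOn ρ (Set.Icc 0 T))
    (hR : (1 < p ∧ ∫⁻ t in Set.Ici (0 : ℝ),
            ENNReal.ofReal (Real.exp (-(ε * p * t) / (p - 1)) * ρ t ^ (1 / (1 - p))) = ⊤) ∨
          (p = 1 ∧ essSup (fun t => ENNReal.ofReal (Real.exp (-(ε * t)) / ρ t))
            (volume.restrict (Set.Ici 0)) = ⊤)) :
    ∃ q : ℝ → ℝ, Measurable q ∧ (∀ t, 0 ≤ q t) ∧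
      (∫⁻ t in Set.Ici (0 : ℝ), ENNReal.ofReal (q t * Real.exp (-(ε * t))) = ⊤) ∧
      ∫⁻ t in Set.Ici (0 : ℝ), ENNReal.ofReal (q t ^ p * ρ t) < ⊤ := by
  rcases hR with ⟨hp1, hRtop⟩ | ⟨hp1, hRtop⟩
  · -- case p > 1
    have hpm1 : (0:ℝ) < p - 1 := by linarith
    have h1mp : (1:ℝ) - p ≠ 0 := by intro h; linarith [sub_eq_zero.mp h]
    set g : ℝ → ℝ := fun t => Real.exp (-(ε * p * t) / (p - 1)) * ρ t ^ (1 / (1 - p)) with hg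
    set G : ℝ → ℝ≥0∞ := fun t => ENNReal.ofReal (g t) with hGdef
    have hgmeas : Measurable g := by
      apply Measurable.mul
      · exact (measurable_const.mul measurable_id').neg.div_const _ |>.exp
      · exact hρmeas.pow measurable_const
    have hGmeas : Measurable G := hgmeas.ennreal_ofReal
    have hGfin : ∀ t, G t < ⊤ := fun t => ENNReal.ofReal_lt_top
    have hGtop : ∫⁻ t in Set.Ici (0:ℝ), G t = ⊤ := hRtop
    obtain ⟨φ, hφmeas, hφle1, hI1, hI2⟩ := exists_phi p hp1 G hGmeas hGfin hGtop
    have hφne : ∀ t, φ t ≠ ⊤ := fun t => (lt_of_le_of_lt (hφle1 t) ENNReal.one_lt_top).ne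
    set q : ℝ → ℝ := fun t =>
      Set.indicator (Set.Ici 0) (fun s => Real.exp (ε * s) * (g s * (φ s).toReal)) t with hq
    have hgnn : ∀ t : ℝ, t ∈ Set.Ici (0:ℝ) → 0 ≤ g t := by
      intro t ht
      exact mul_nonneg (Real.exp_nonneg _) (Real.rpow_nonneg (hρpos t ht).le _)
    have hqmeas : Measurable q := by
      apply Measurable.indicator _ measurableSet_Ici
      exact ((measurable_const.mul measurable_id').exp).mul
        (hgmeas.mul hφmeas.ennreal_toReal)
    have hqnn : ∀ t, 0 ≤ q t := by
      intro t
      apply Set.indicator_nonneg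
      intro s hs
      exact mul_nonneg (Real.exp_nonneg _)
        (mul_nonneg (hgnn s hs) ENNReal.toReal_nonneg)
    refine ⟨q, hqmeas, hqnn, ?_, ?_⟩
    · rw [← hI1]
      apply setLIntegral_congr_fun measurableSet_Ici
      intro t ht
      beta_reduce
      have hqt : q t = Real.exp (ε * t) * (g t * (φ t).toReal) := Set.indicator_of_mem ht _
      have h1 : q t * Real.exp (-(ε * t)) = g t * (φ t).toReal := by
        rw [hqt, Real.exp_neg]
        field_simp
      rw [h1, ENNReal.ofReal_mul (hgnn t ht), ENNReal.ofReal_toReal (hφne t)]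
    · have heq : ∫⁻ t in Set.Ici (0:ℝ), ENNReal.ofReal (q t ^ p * ρ t)
          = ∫⁻ t in Set.Ici (0:ℝ), G t * (φ t) ^ p := by
        apply setLIntegral_congr_fun measurableSet_Ici
        intro t ht
        beta_reduce
        have hqt : q t = Real.exp (ε * t) * (g t * (φ t).toReal) := Set.indicator_of_mem ht _
        have hρt : (0:ℝ) < ρ t := hρpos t ht
        have hφ' : (0:ℝ) ≤ (φ t).toReal := ENNReal.toReal_nonneg
        have key : q t ^ p * ρ t = g t * (φ t).toReal ^ p := by
          rw [hqt, hg]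
          simp only
          rw [Real.mul_rpow (Real.exp_nonneg _)
              (mul_nonneg (hgnn t ht) hφ'),
            Real.mul_rpow (hgnn t ht) hφ',
            Real.mul_rpow (Real.exp_nonneg _) (Real.rpow_nonneg hρt.le _),
            ← Real.exp_mul, ← Real.exp_mul, ← Real.rpow_mul hρt.le]
          have e1 : Real.exp (ε * t * p) * (Real.exp (-(ε * p * t) / (p - 1) * p)
              * ρ t ^ (1 / (1 - p) * p) * (φ t).toReal ^ p) * ρ t
              = (Real.exp (ε * t * p) * Real.exp (-(ε * p * t) / (p - 1) * p))
                * (ρ t ^ (1 / (1 - p) * p) * ρ t ^ (1:ℝ)) * (φ t).toReal ^ p := by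
            rw [Real.rpow_one]; ring
          rw [e1, ← Real.exp_add, ← Real.rpow_add hρt]
          have e2 : ε * t * p + -(ε * p * t) / (p - 1) * p = -(ε * p * t) / (p - 1) := by
            field_simp
            ring
          have e3 : 1 / (1 - p) * p + 1 = 1 / (1 - p) := by
            field_simp
            ring
          rw [e2, e3]
        rw [key, ENNReal.ofReal_mul (hgnn t ht), hGdef]
        congr 1
        rw [← ENNReal.ofReal_rpow_of_nonneg hφ' (by linarith : (0:ℝ) ≤ p),
          ENNReal.ofReal_toReal (hφne t)]
      rw [heq]
      exact hI2
  · -- case p = 1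
    subst hp1
    simp only [Real.rpow_one]
    classical
    set f : ℝ → ℝ≥0∞ := fun t => ENNReal.ofReal (Real.exp (-(ε * t)) / ρ t) with hf
    have hfmeas : Measurable f :=
      (((measurable_const.mul measurable_id').neg.exp).div hρmeas).ennreal_ofReal
    -- sets where the ratio is large
    set B : ℕ → Set ℝ := fun n =>
      Set.Ici 0 ∩ {t : ℝ | (4:ℝ)^n * ρ t < Real.exp (-(ε * t))} with hB
    have hBmeas : ∀ n, MeasurableSet (B n) := by
      intro n
      apply measurableSet_Ici.inter
      exact measurableSet_lt (measurable_const.mul hρmeas)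
        ((measurable_const.mul measurable_id').neg.exp)
    have hBpos : ∀ n, 0 < volume (B n) := by
      intro n
      set S : Set ℝ := {t | ENNReal.ofReal ((4:ℝ)^n) < f t} with hS
      have hSmeas : MeasurableSet S := measurableSet_lt measurable_const hfmeas
      have hSpos : 0 < (volume.restrict (Set.Ici 0)) S := by
        by_contra h
        push_neg at h
        have h0 : (volume.restrict (Set.Ici 0)) S = 0 := le_antisymm h zero_le
        have hae : f ≤ᵐ[volume.restrict (Set.Ici 0)] fun _ => ENNReal.ofReal ((4:ℝ)^n) := by
          rw [Filter.EventuallyLE, ae_iff]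
          convert h0 using 2
          ext t
          simp [hS, not_le]
        have := essSup_le_of_ae_le _ hae
        rw [hRtop] at this
        exact absurd (eq_top_iff.mpr this) ENNReal.ofReal_ne_top
      have heq : S ∩ Set.Ici 0 = B n := by
        ext t
        simp only [Set.mem_inter_iff, Set.mem_setOf_eq, hS, hB, Set.mem_Ici]
        constructor
        · rintro ⟨hlt, ht⟩
          refine ⟨ht, ?_⟩
          rw [ENNReal.ofReal_lt_ofReal_iff_of_nonneg (by positivity)] at hlt
          rwa [lt_div_iff₀ (hρpos t ht)] at hlt
        · rintro ⟨ht, hlt⟩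
          refine ⟨?_, ht⟩
          rw [ENNReal.ofReal_lt_ofReal_iff_of_nonneg (by positivity)]
          rwa [lt_div_iff₀ (hρpos t ht)]
      rw [Measure.restrict_apply hSmeas, heq] at hSpos
      exact hSpos
    -- truncate to bounded sets
    have hBk : ∀ n, ∃ k : ℕ, 0 < volume (B n ∩ Set.Icc 0 k) := by
      intro n
      by_contra h
      push_neg at h
      have h0 : ∀ k : ℕ, volume (B n ∩ Set.Icc 0 k) = 0 :=
        fun k => le_antisymm (h k) zero_le
      have hsub : B n ⊆ ⋃ k : ℕ, B n ∩ Set.Icc 0 k := by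
        intro t ht
        obtain ⟨k, hk⟩ := exists_nat_ge t
        exact Set.mem_iUnion.mpr ⟨k, ht, ht.1, hk⟩
      have : volume (B n) = 0 :=
        le_antisymm ((measure_mono hsub).trans (measure_iUnion_null h0).le) zero_le
      exact absurd this (hBpos n).ne'
    choose k hk using hBk
    set A : ℕ → Set ℝ := fun n => B n ∩ Set.Icc 0 (k n) with hA
    have hAmeas : ∀ n, MeasurableSet (A n) := fun n => (hBmeas n).inter measurableSet_Icc
    have hAsub : ∀ n, A n ⊆ Set.Ici 0 := fun n t ht => ht.1.1
    have hAvolfin : ∀ n, volume (A n) < ⊤ := by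
      intro n
      calc volume (A n) ≤ volume (Set.Icc (0:ℝ) (k n)) := measure_mono Set.inter_subset_right
        _ < ⊤ := by rw [Real.volume_Icc]; exact ENNReal.ofReal_lt_top
    set w : ℕ → ℝ≥0∞ := fun n => ∫⁻ t in A n, ENNReal.ofReal (Real.exp (-(ε * t))) with hw
    have hwpos : ∀ n, 0 < w n := by
      intro n
      have hlb : ∀ t ∈ A n, ENNReal.ofReal (Real.exp (-(ε * (k n)))) ≤
          ENNReal.ofReal (Real.exp (-(ε * t))) := by
        intro t ht
        apply ENNReal.ofReal_le_ofReal
        apply Real.exp_le_exp.mpr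
        have : t ≤ (k n : ℝ) := ht.2.2
        nlinarith
      calc (0:ℝ≥0∞) < ENNReal.ofReal (Real.exp (-(ε * (k n)))) * volume (A n) :=
            ENNReal.mul_pos (by simp [Real.exp_pos]) (hk n).ne'
        _ = ∫⁻ _ in A n, ENNReal.ofReal (Real.exp (-(ε * (k n)))) :=
            (setLIntegral_const _ _).symm
        _ ≤ w n := setLIntegral_mono'
            (hAmeas n) hlb
    have hwfin : ∀ n, w n < ⊤ := by
      intro n
      have hub : ∀ t ∈ A n, ENNReal.ofReal (Real.exp (-(ε * t))) ≤ 1 := by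
        intro t ht
        have ht0 : (0:ℝ) ≤ t := ht.1.1
        have : Real.exp (-(ε * t)) ≤ 1 := Real.exp_le_one_iff.mpr (by nlinarith)
        calc ENNReal.ofReal (Real.exp (-(ε * t))) ≤ ENNReal.ofReal 1 :=
              ENNReal.ofReal_le_ofReal this
          _ = 1 := ENNReal.ofReal_one
      calc w n ≤ ∫⁻ _ in A n, 1 := setLIntegral_mono' (hAmeas n) hub
        _ = volume (A n) := by rw [setLIntegral_const, one_mul]
        _ < ⊤ := hAvolfin n
    set c : ℕ → ℝ≥0∞ := fun n => (2:ℝ≥0∞)^n / w n with hc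
    have hcfin : ∀ n, c n < ⊤ := fun n =>
      ENNReal.div_lt_top (by simp) (hwpos n).ne'
    set Φ : ℝ → ℝ≥0∞ := fun t => ∑' n, (A n).indicator (fun _ => c n) t with hΦ
    have hΦmeas : Measurable Φ :=
      Measurable.ennreal_tsum fun n => measurable_const.indicator (hAmeas n)
    have hΦfin : ∀ t, Φ t < ⊤ := by
      intro t
      by_cases ht : (0:ℝ) ≤ t
      · have hρt : 0 < ρ t := hρpos t ht
        obtain ⟨N, hN⟩ := pow_unbounded_of_one_lt (Real.exp (-(ε * t)) / ρ t)
          (by norm_num : (1:ℝ) < 4)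
        have hnot : ∀ n, N ≤ n → t ∉ A n := by
          intro n hn hmem
          have h4 : (4:ℝ)^N ≤ (4:ℝ)^n := pow_le_pow_right₀ (by norm_num) hn
          have := hmem.1.2
          simp only [Set.mem_setOf_eq] at this
          rw [div_lt_iff₀ hρt] at hN
          nlinarith
        have : Φ t = ∑ n ∈ Finset.range N, (A n).indicator (fun _ => c n) t := by
          rw [hΦ]
          exact tsum_eq_sum fun b hb =>
            Set.indicator_of_notMem (hnot b (by simpa using hb)) _
        rw [this]
        apply ENNReal.sum_lt_top.mpr
        intro n _
        have hle : (A n).indicator (fun _ => c n) t ≤ c n := by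
          by_cases h : t ∈ A n
          · rw [Set.indicator_of_mem h]
          · rw [Set.indicator_of_notMem h]; exact zero_le
        exact lt_of_le_of_lt hle (hcfin n)
      · have : Φ t = 0 := by
          rw [hΦ]
          have : ∀ n, t ∉ A n := fun n hmem => ht (hAsub n hmem)
          simp only [Set.indicator_of_notMem (this _)]
          exact tsum_zero
        rw [this]
        simp
    set q : ℝ → ℝ := fun t => (Φ t).toReal with hq
    have hqmeas : Measurable q := hΦmeas.ennreal_toReal
    have hqnn : ∀ t, 0 ≤ q t := fun t => ENNReal.toReal_nonneg
    have hEmeas : Measurable fun s : ℝ => ENNReal.ofReal (Real.exp (-(ε * s))) :=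
      ((measurable_const.mul measurable_id').neg.exp).ennreal_ofReal
    have hpipe : ∀ R : ℝ → ℝ≥0∞, Measurable R →
        (∫⁻ t in Set.Ici (0:ℝ), ∑' n, (A n).indicator (fun s => c n * R s) t)
          = ∑' n, ∫⁻ t in A n, c n * R t := by
      intro R hRm
      rw [lintegral_tsum fun n => ((hRm.const_mul (c n)).indicator (hAmeas n)).aemeasurable]
      apply tsum_congr
      intro n
      rw [lintegral_indicator (hAmeas n), Measure.restrict_restrict (hAmeas n),
          Set.inter_eq_self_of_subset_left (hAsub n)]
    have hΦmul : ∀ (R : ℝ → ℝ≥0∞) (t : ℝ),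
        Φ t * R t = ∑' n, (A n).indicator (fun s => c n * R s) t := by
      intro R t
      rw [hΦ]
      simp only
      rw [← ENNReal.tsum_mul_right]
      apply tsum_congr
      intro n
      by_cases h : t ∈ A n
      · simp [Set.indicator_of_mem h]
      · simp [Set.indicator_of_notMem h]
    refine ⟨q, hqmeas, hqnn, ?_, ?_⟩
    · have hcong : ∫⁻ t in Set.Ici (0:ℝ), ENNReal.ofReal (q t * Real.exp (-(ε * t)))
          = ∫⁻ t in Set.Ici (0:ℝ), Φ t * ENNReal.ofReal (Real.exp (-(ε * t))) := by
        apply setLIntegral_congr_fun measurableSet_Ici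
        intro t ht
        beta_reduce
        rw [ENNReal.ofReal_mul (hqnn t), hq]
        simp only
        rw [ENNReal.ofReal_toReal (hΦfin t).ne]
      rw [hcong, lintegral_congr (hΦmul fun s => ENNReal.ofReal (Real.exp (-(ε * s)))),
        hpipe _ hEmeas]
      have hterm : ∀ n : ℕ, (∫⁻ t in A n, c n * ENNReal.ofReal (Real.exp (-(ε * t))))
          = (2:ℝ≥0∞)^n := by
        intro n
        rw [lintegral_const_mul _ hEmeas]
        exact ENNReal.div_mul_cancel (hwpos n).ne' (hwfin n).ne
      rw [tsum_congr hterm]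
      apply top_le_iff.mp
      calc (⊤:ℝ≥0∞) = ∑' _ : ℕ, (1:ℝ≥0∞) :=
            (ENNReal.tsum_const_eq_top_of_ne_zero one_ne_zero).symm
        _ ≤ ∑' n : ℕ, (2:ℝ≥0∞)^n :=
            ENNReal.tsum_le_tsum fun n => one_le_pow_of_one_le' ENNReal.one_lt_two.le n
    · have hcong : ∫⁻ t in Set.Ici (0:ℝ), ENNReal.ofReal (q t * ρ t)
          = ∫⁻ t in Set.Ici (0:ℝ), Φ t * ENNReal.ofReal (ρ t) := by
        apply setLIntegral_congr_fun measurableSet_Ici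
        intro t ht
        beta_reduce
        rw [ENNReal.ofReal_mul (hqnn t), hq]
        simp only
        rw [ENNReal.ofReal_toReal (hΦfin t).ne]
      rw [hcong, lintegral_congr (hΦmul fun s => ENNReal.ofReal (ρ s)),
        hpipe _ hρmeas.ennreal_ofReal]
      have h4 : ∀ n : ℕ, ENNReal.ofReal (((4:ℝ)^n)⁻¹) = (((4:ℝ≥0∞))^n)⁻¹ := by
        intro n
        rw [ENNReal.ofReal_inv_of_pos (by positivity), ENNReal.ofReal_pow (by norm_num)]
        norm_num
      have hterm : ∀ n : ℕ, (∫⁻ t in A n, c n * ENNReal.ofReal (ρ t)) ≤ (2⁻¹:ℝ≥0∞)^n := by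
        intro n
        have hub : ∀ t ∈ A n, ENNReal.ofReal (ρ t) ≤
            ENNReal.ofReal (((4:ℝ)^n)⁻¹) * ENNReal.ofReal (Real.exp (-(ε * t))) := by
          intro t ht
          have h1 : (4:ℝ)^n * ρ t < Real.exp (-(ε * t)) := ht.1.2
          have hρt : 0 < ρ t := hρpos t ht.1.1
          have h2 : ρ t ≤ ((4:ℝ)^n)⁻¹ * Real.exp (-(ε * t)) := by
            rw [inv_mul_eq_div, le_div_iff₀ (by positivity)]
            nlinarith
          calc ENNReal.ofReal (ρ t)
              ≤ ENNReal.ofReal (((4:ℝ)^n)⁻¹ * Real.exp (-(ε * t))) :=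
                ENNReal.ofReal_le_ofReal h2
            _ = _ := ENNReal.ofReal_mul (by positivity)
        have hstep : (∫⁻ t in A n, c n * ENNReal.ofReal (ρ t))
            ≤ c n * ENNReal.ofReal (((4:ℝ)^n)⁻¹) * w n := by
          calc (∫⁻ t in A n, c n * ENNReal.ofReal (ρ t))
              ≤ ∫⁻ t in A n, (c n * ENNReal.ofReal (((4:ℝ)^n)⁻¹))
                  * ENNReal.ofReal (Real.exp (-(ε * t))) := by
                apply setLIntegral_mono' (hAmeas n)
                intro t ht
                rw [mul_assoc]
                exact mul_le_mul_right (hub t ht) _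
            _ = c n * ENNReal.ofReal (((4:ℝ)^n)⁻¹) * w n := by
                rw [lintegral_const_mul _ hEmeas]
        refine hstep.trans ?_
        have hA2 : c n * ENNReal.ofReal (((4:ℝ)^n)⁻¹) * w n
            = (2:ℝ≥0∞)^n * ENNReal.ofReal (((4:ℝ)^n)⁻¹) := by
          rw [mul_right_comm, ENNReal.div_mul_cancel (hwpos n).ne' (hwfin n).ne]
        rw [hA2, h4]
        have h4' : (4:ℝ≥0∞)^n = 2^n * 2^n := by
          rw [← mul_pow]
          norm_num
        rw [h4', ENNReal.mul_inv (Or.inl (pow_ne_zero _ (by norm_num)))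
            (Or.inl (by simp)), ← mul_assoc,
          ENNReal.mul_inv_cancel (pow_ne_zero _ (by norm_num)) (by simp), one_mul,
          ← ENNReal.inv_pow]
      calc (∑' n : ℕ, ∫⁻ t in A n, c n * ENNReal.ofReal (ρ t))
          ≤ ∑' n : ℕ, (2⁻¹:ℝ≥0∞)^n := ENNReal.tsum_le_tsum hterm
        _ = (1 - 2⁻¹)⁻¹ := ENNReal.tsum_geometric _
        _ < ⊤ := by
            rw [ENNReal.inv_lt_top, pos_iff_ne_zero]
            intro h
            rw [tsub_eq_zero_iff_le] at h
            have h2 : ¬ ((1:ℝ≥0∞) ≤ 2⁻¹) := by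
              rw [not_le, ENNReal.inv_lt_one]
              exact ENNReal.one_lt_two
            exact h2 h
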